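/- For every integer k ≥ 0 and every N > 0, lim_{ε→0⁺} ε^{−N}·∫_{‖u‖ ≥ ε^{1/3}} ε^{−d/2}·h(‖u‖²/ε)·‖u‖^k du = 0; i.e. the mass of the rescaled kernel outside a ball of radius ε^{1/3}, weighted by any fixed power of ‖u‖, vanishes faster than any power of ε (the localization estimate used to reduce integration over the manifold to integration over a tangent-space ball). -/

import Mathlib

open MeasureTheory Filter Set
open scoped InnerProductSpace Topology

noncomputable section

/-- Euclidean space `ℝ^d`. -/
abbrev E (d : ℕ) := EuclideanSpace ℝ (Fin d)

/-- The rescaled symmetric kernel `h_ε(x,y) = ε^{-d/2} h(‖y-x‖²/ε)`. -/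
def hker (d : ℕ) (h : ℝ → ℝ) (ε : ℝ) (x y : E d) : ℝ :=
  ε ^ (-(d : ℝ) / 2) * h (‖y - x‖ ^ 2 / ε)

/-- The Euclidean Laplacian `Δ f(x) = ∑ᵢ ∂²f/∂xᵢ²`. -/
def lap {d : ℕ} (f : E d → ℝ) (x : E d) : ℝ :=
  ∑ i, fderiv ℝ (fun z => fderiv ℝ f z (EuclideanSpace.single i 1)) x (EuclideanSpace.single i 1)

/-- The divergence `∇·w (x) = ∑ᵢ ∂wᵢ/∂xᵢ`. -/
def divg {d : ℕ} (w : E d → E d) (x : E d) : ℝ :=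
  ∑ i, fderiv ℝ w x (EuclideanSpace.single i 1) i

/-- Gaussian integrability on `E d`. -/
lemma integrable_gaussE (d : ℕ) {a : ℝ} (ha : 0 < a) :
    Integrable (fun u : E d => Real.exp (-a * ‖u‖ ^ 2)) := by
  have h1 := (GaussianFourier.integrable_cexp_neg_mul_sq_norm_add (V := E d)
      (b := (a : ℂ)) (by simpa using ha) 0 (0 : E d)).norm
  refine h1.congr (Filter.Eventually.of_forall fun u => ?_)
  have hre : ((-(a:ℂ)) * (‖u‖:ℂ) ^ 2 + 0 * ((⟪(0 : E d), u⟫_ℝ : ℝ) : ℂ)).re = -a * ‖u‖ ^ 2 := by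
    simp only [Complex.add_re, Complex.mul_re, Complex.neg_re, Complex.ofReal_re,
      Complex.neg_im, Complex.ofReal_im, ← Complex.ofReal_pow, Complex.zero_re]
    ring
  simp only [Complex.norm_exp, hre]

/-- Polynomial times gaussian is bounded. -/
lemma aux_pow_exp (c : ℝ) (hc : 0 < c) (k : ℕ) :
    ∃ K : ℝ, 0 < K ∧ ∀ x : ℝ, 0 ≤ x → x ^ k * Real.exp (-(c / 4) * x ^ 2) ≤ K := by
  refine ⟨1 + (k.factorial : ℝ) * (4 / c) ^ k, by positivity, fun x hx => ?_⟩
  have hfac : (0:ℝ) < (k.factorial : ℝ) := by exact_mod_cast k.factorial_pos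
  have h1 : ((c / 4) * x ^ 2) ^ k ≤ (k.factorial : ℝ) * Real.exp ((c / 4) * x ^ 2) := by
    have := Real.pow_div_factorial_le_exp (x := (c / 4) * x ^ 2) (by positivity) k
    rw [div_le_iff₀ hfac] at this
    linarith
  rcases le_total x 1 with hx1 | hx1
  · have hp : x ^ k ≤ 1 := pow_le_one₀ hx hx1
    have he : Real.exp (-(c / 4) * x ^ 2) ≤ 1 := by
      rw [Real.exp_le_one_iff]
      nlinarith
    have hK : (0:ℝ) ≤ (k.factorial : ℝ) * (4 / c) ^ k := by positivity
    nlinarith [Real.exp_pos (-(c / 4) * x ^ 2)]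
  · have h2 : x ^ k ≤ x ^ (2 * k) := pow_le_pow_right₀ hx1 (by omega)
    have h3 : x ^ (2 * k) = (4 / c) ^ k * ((c / 4) * x ^ 2) ^ k := by
      rw [pow_mul, mul_pow, ← mul_assoc, ← mul_pow]
      rw [div_mul_div_comm]
      rw [show (4 : ℝ) * c / (c * 4) = 1 by rw [mul_comm c 4]; field_simp]
      simp
    have hexp := Real.exp_pos ((c / 4) * x ^ 2)
    have hmain : x ^ k * Real.exp (-(c / 4) * x ^ 2) ≤ (k.factorial : ℝ) * (4 / c) ^ k := by
      have hee : Real.exp ((c / 4) * x ^ 2) * Real.exp (-(c / 4) * x ^ 2) = 1 := by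
        rw [← Real.exp_add]; ring_nf; exact Real.exp_zero
      calc x ^ k * Real.exp (-(c / 4) * x ^ 2)
          ≤ x ^ (2 * k) * Real.exp (-(c / 4) * x ^ 2) :=
            mul_le_mul_of_nonneg_right h2 (Real.exp_nonneg _)
        _ = (4 / c) ^ k * (((c / 4) * x ^ 2) ^ k * Real.exp (-(c / 4) * x ^ 2)) := by
            rw [h3]; ring
        _ ≤ (4 / c) ^ k * ((k.factorial : ℝ) * Real.exp ((c / 4) * x ^ 2)
              * Real.exp (-(c / 4) * x ^ 2)) := by
            apply mul_le_mul_of_nonneg_left _ (by positivity)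
            exact mul_le_mul_of_nonneg_right h1 (Real.exp_nonneg _)
        _ = (k.factorial : ℝ) * (4 / c) ^ k := by
            rw [mul_assoc, hee]; ring
    linarith

/-- Localization estimate: for every `k ≥ 0` and `N > 0`, the mass of
the rescaled kernel outside a ball of radius `ε^{1/3}`, weighted by `‖u‖^k`, vanishes
faster than any power of `ε`. -/
theorem stmt14
    (d : ℕ) (hd : 0 < d)
    (h : ℝ → ℝ) (h_nonneg : ∀ u, 0 ≤ h u) (h_cont : Continuous h)
    (C c : ℝ) (hC : 0 < C) (hc : 0 < c)
    (h_decay : ∀ u : ℝ, 0 ≤ u → h u ≤ C * Real.exp (-c * u))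
    (k : ℕ) (N : ℝ) (hN : 0 < N) :
    Tendsto (fun ε : ℝ => ε ^ (-N) *
        ∫ u in {u : E d | ε ^ ((1 : ℝ) / 3) ≤ ‖u‖}, ε ^ (-(d : ℝ) / 2) * h (‖u‖ ^ 2 / ε) * ‖u‖ ^ k)
      (𝓝[>] (0 : ℝ)) (𝓝 0) := by
  obtain ⟨K, hK, hKb⟩ := aux_pow_exp c hc k
  have hgauss : Integrable (fun u : E d => Real.exp (-(c / 4) * ‖u‖ ^ 2)) :=
    integrable_gaussE d (by linarith)
  set M : ℝ := ∫ u : E d, Real.exp (-(c / 4) * ‖u‖ ^ 2) with hM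
  have hM0 : 0 ≤ M := integral_nonneg fun u => Real.exp_nonneg _
  set p : ℝ := 3 * (N + (d : ℝ) / 2) with hp
  have hp0 : 0 < p := by positivity
  -- the substitution s = ε ^ (-1/3) tends to infinity
  have hφ : Tendsto (fun ε : ℝ => ε ^ (-(1 : ℝ) / 3)) (𝓝[>] (0:ℝ)) atTop := by
    have h1 : Tendsto (fun ε : ℝ => ε ^ ((1 : ℝ) / 3)) (𝓝[>] (0:ℝ)) (𝓝[>] (0:ℝ)) := by
      apply tendsto_nhdsWithin_of_tendsto_nhds_of_eventually_within
      · have h2 := (Real.continuousAt_rpow_const 0 (1/3) (Or.inr (by norm_num))).tendsto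
        rw [Real.zero_rpow (by norm_num : (1:ℝ)/3 ≠ 0)] at h2
        exact h2.mono_left nhdsWithin_le_nhds
      · filter_upwards [self_mem_nhdsWithin] with ε hε
        exact Real.rpow_pos_of_pos hε _
    have h3 := tendsto_inv_nhdsGT_zero.comp h1
    refine h3.congr' ?_
    filter_upwards [self_mem_nhdsWithin] with ε (hε : 0 < ε)
    simp only [Function.comp_apply]
    rw [← Real.rpow_neg hε.le, neg_div]
  have hG : Tendsto (fun s : ℝ => s ^ p * Real.exp (-(c / 2) * s)) atTop (𝓝 0) :=
    tendsto_rpow_mul_exp_neg_mul_atTop_nhds_zero p (c / 2) (by linarith)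
  have hB : Tendsto (fun ε : ℝ => (C * K * M) *
      ((ε ^ (-(1:ℝ)/3)) ^ p * Real.exp (-(c/2) * ε ^ (-(1:ℝ)/3)))) (𝓝[>] (0:ℝ)) (𝓝 0) := by
    have := (hG.comp hφ).const_mul (C * K * M)
    simpa using this
  apply squeeze_zero' _ _ hB
  · -- nonnegativity
    filter_upwards [self_mem_nhdsWithin] with ε (hε : 0 < ε)
    apply mul_nonneg (Real.rpow_nonneg hε.le _)
    apply setIntegral_nonneg
    · exact (isClosed_le continuous_const continuous_norm).measurableSet
    · intro u _
      have := h_nonneg (‖u‖ ^ 2 / ε)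
      have h1 : (0:ℝ) ≤ ε ^ (-(d:ℝ)/2) := Real.rpow_nonneg hε.le _
      positivity
  · -- the bound
    filter_upwards [Ioo_mem_nhdsGT_of_mem (Set.left_mem_Ico.mpr zero_lt_one)]
      with ε hεIoo
    obtain ⟨hε0, hε1⟩ := hεIoo
    set s : ℝ := ε ^ (-(1:ℝ)/3) with hs
    set A : ℝ := ε ^ (-(d:ℝ)/2) * C * Real.exp (-(c/2) * s) * K with hA
    have hεd : (0:ℝ) ≤ ε ^ (-(d:ℝ)/2) := Real.rpow_nonneg hε0.le _
    have hA0 : 0 ≤ A := by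
      apply mul_nonneg (mul_nonneg (mul_nonneg hεd hC.le) (Real.exp_nonneg _)) hK.le
    have hSmeas : MeasurableSet {u : E d | ε ^ ((1:ℝ)/3) ≤ ‖u‖} :=
      (isClosed_le continuous_const continuous_norm).measurableSet
    -- pointwise bound on the set
    have hfg : ∀ u ∈ {u : E d | ε ^ ((1:ℝ)/3) ≤ ‖u‖},
        ε ^ (-(d:ℝ)/2) * h (‖u‖ ^ 2 / ε) * ‖u‖ ^ k ≤ A * Real.exp (-(c/4) * ‖u‖ ^ 2) := by
      intro u hu
      have hu' : ε ^ ((1:ℝ)/3) ≤ ‖u‖ := hu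
      have hεp13 : 0 < ε ^ ((1:ℝ)/3) := Real.rpow_pos_of_pos hε0 _
      have hu2 : s ≤ ‖u‖ ^ 2 / ε := by
        have h1 : ε ^ ((2:ℝ)/3) ≤ ‖u‖ ^ 2 := by
          have := pow_le_pow_left₀ hεp13.le hu' 2
          calc ε ^ ((2:ℝ)/3) = (ε ^ ((1:ℝ)/3)) ^ (2:ℕ) := by
                rw [← Real.rpow_natCast (ε ^ ((1:ℝ)/3)) 2, ← Real.rpow_mul hε0.le]
                norm_num
            _ ≤ ‖u‖ ^ 2 := this
        have h2 : ε ^ ((2:ℝ)/3) / ε ≤ ‖u‖ ^ 2 / ε := by gcongr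
        have h3 : ε ^ ((2:ℝ)/3) / ε = s := by
          rw [hs, div_eq_mul_inv, ← Real.rpow_neg_one ε, ← Real.rpow_add hε0]
          norm_num
        linarith
      have hu3 : ‖u‖ ^ 2 ≤ ‖u‖ ^ 2 / ε := by
        rw [le_div_iff₀ hε0]
        nlinarith [sq_nonneg ‖u‖]
      have hd1 : h (‖u‖ ^ 2 / ε) ≤ C * Real.exp (-c * (‖u‖ ^ 2 / ε)) :=
        h_decay _ (by positivity)
      have hd2 : Real.exp (-c * (‖u‖ ^ 2 / ε)) ≤
          Real.exp (-(c/2) * s) * Real.exp (-(c/2) * ‖u‖ ^ 2) := by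
        rw [← Real.exp_add]
        apply Real.exp_le_exp.mpr
        nlinarith
      have hd3 : Real.exp (-(c/2) * ‖u‖ ^ 2) * ‖u‖ ^ k ≤ K * Real.exp (-(c/4) * ‖u‖ ^ 2) := by
        have hsplit : Real.exp (-(c/2) * ‖u‖ ^ 2) =
            Real.exp (-(c/4) * ‖u‖ ^ 2) * Real.exp (-(c/4) * ‖u‖ ^ 2) := by
          rw [← Real.exp_add]; ring_nf
        rw [hsplit]
        have hb := hKb ‖u‖ (norm_nonneg u)
        nlinarith [Real.exp_nonneg (-(c/4) * ‖u‖ ^ 2), pow_nonneg (norm_nonneg u) k]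
      calc ε ^ (-(d:ℝ)/2) * h (‖u‖ ^ 2 / ε) * ‖u‖ ^ k
          ≤ ε ^ (-(d:ℝ)/2) * (C * (Real.exp (-(c/2) * s) * Real.exp (-(c/2) * ‖u‖ ^ 2)))
              * ‖u‖ ^ k := by
            apply mul_le_mul_of_nonneg_right _ (pow_nonneg (norm_nonneg u) k)
            apply mul_le_mul_of_nonneg_left _ hεd
            exact hd1.trans (mul_le_mul_of_nonneg_left hd2 hC.le)
        _ = (ε ^ (-(d:ℝ)/2) * C * Real.exp (-(c/2) * s))
              * (Real.exp (-(c/2) * ‖u‖ ^ 2) * ‖u‖ ^ k) := by ring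
        _ ≤ (ε ^ (-(d:ℝ)/2) * C * Real.exp (-(c/2) * s))
              * (K * Real.exp (-(c/4) * ‖u‖ ^ 2)) := by
            apply mul_le_mul_of_nonneg_left hd3
            exact mul_nonneg (mul_nonneg hεd hC.le) (Real.exp_nonneg _)
        _ = A * Real.exp (-(c/4) * ‖u‖ ^ 2) := by rw [hA]; ring
    -- integral bound
    have hint1 : (∫ u in {u : E d | ε ^ ((1:ℝ)/3) ≤ ‖u‖},
        ε ^ (-(d:ℝ)/2) * h (‖u‖ ^ 2 / ε) * ‖u‖ ^ k) ≤
        ∫ u in {u : E d | ε ^ ((1:ℝ)/3) ≤ ‖u‖}, A * Real.exp (-(c/4) * ‖u‖ ^ 2) := by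
      apply integral_mono_of_nonneg
      · apply ae_of_all
        intro u
        have := h_nonneg (‖u‖ ^ 2 / ε)
        positivity
      · exact (hgauss.const_mul A).restrict
      · exact (ae_restrict_iff' hSmeas).mpr (ae_of_all _ hfg)
    have hint2 : (∫ u in {u : E d | ε ^ ((1:ℝ)/3) ≤ ‖u‖}, A * Real.exp (-(c/4) * ‖u‖ ^ 2)) ≤
        ∫ u : E d, A * Real.exp (-(c/4) * ‖u‖ ^ 2) := by
      apply setIntegral_le_integral (hgauss.const_mul A)
      exact ae_of_all _ fun u => mul_nonneg hA0 (Real.exp_nonneg _)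
    have hint3 : (∫ u : E d, A * Real.exp (-(c/4) * ‖u‖ ^ 2)) = A * M := integral_const_mul A _
    have hεN : (0:ℝ) ≤ ε ^ (-N) := Real.rpow_nonneg hε0.le _
    have hmain : ε ^ (-N) * (∫ u in {u : E d | ε ^ ((1:ℝ)/3) ≤ ‖u‖},
        ε ^ (-(d:ℝ)/2) * h (‖u‖ ^ 2 / ε) * ‖u‖ ^ k) ≤ ε ^ (-N) * (A * M) := by
      apply mul_le_mul_of_nonneg_left _ hεN
      calc _ ≤ _ := hint1
        _ ≤ _ := hint2
        _ = A * M := hint3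
    refine hmain.trans_eq ?_
    have hsp : s ^ p = ε ^ (-N) * ε ^ (-(d:ℝ)/2) := by
      rw [hs, ← Real.rpow_mul hε0.le, ← Real.rpow_add hε0, hp]
      congr 1
      ring
    rw [hA, hsp]
    ring

end
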